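/- Dominated convergence theorem for sublinear expectations: suppose $|X_n| \le Y$ for all $n$ with $\hat{E}[Y] < \infty$ and $\lim_{c \to \infty} \hat{E}[Y \cdot 1_{\{Y > c\}}] = 0$, and suppose also $\hat{E}[|X| \cdot 1_{\{|X| > c\}}] \to 0$ as $c \to \infty$. If $X_n \to X$ in capacity, then $\hat{E}[|X_n - X|] \to 0$. -/

import Mathlib

open MeasureTheory Filter Set Topology ENNReal

/-- The upper capacity associated to a family of probability measures. -/
noncomputable def upperCap {Ω : Type*} [MeasurableSpace Ω]
    (Ps : Set (Measure Ω)) (A : Set Ω) : ℝ≥0∞ :=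
  ⨆ P ∈ Ps, P A

/-- The sublinear expectation (of a nonnegative quantity). -/
noncomputable def subExp {Ω : Type*} [MeasurableSpace Ω]
    (Ps : Set (Measure Ω)) (Z : Ω → ℝ) : ℝ≥0∞ :=
  ⨆ P ∈ Ps, ∫⁻ ω, ENNReal.ofReal (Z ω) ∂P

theorem dominated_convergence_sublinear {Ω : Type*} [MeasurableSpace Ω]
    (Ps : Set (Measure Ω)) (hne : Ps.Nonempty)
    (hprob : ∀ P ∈ Ps, IsProbabilityMeasure P)
    (X : Ω → ℝ) (Xn : ℕ → Ω → ℝ) (Y : Ω → ℝ)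
    (hX : Measurable X) (hXn : ∀ n, Measurable (Xn n)) (hY : Measurable Y)
    (hYpos : ∀ ω, 0 ≤ Y ω)
    (hdom : ∀ n ω, |Xn n ω| ≤ Y ω)
    (hYint : subExp Ps Y < ∞)
    (hYui : Tendsto (fun c : ℝ =>
        subExp Ps (fun ω => Set.indicator {ω' | c < Y ω'} Y ω)) atTop (𝓝 0))
    (hXui : Tendsto (fun c : ℝ =>
        subExp Ps (fun ω => Set.indicator {ω' | c < |X ω'|} (fun ω' => |X ω'|) ω))
        atTop (𝓝 0))
    (hconv : ∀ ε > (0 : ℝ),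
      Tendsto (fun n => upperCap Ps {ω | ε ≤ |Xn n ω - X ω|}) atTop (𝓝 0)) :
    Tendsto (fun n => subExp Ps (fun ω => |Xn n ω - X ω|)) atTop (𝓝 0) := by
  rw [ENNReal.tendsto_atTop_zero]
  intro δ hδ
  have hδ4 : (0 : ℝ≥0∞) < δ / 4 := ENNReal.div_pos hδ.ne' (by norm_num)
  -- choose ε
  set ε' : ℝ≥0∞ := min 1 (δ / 4) with hε'def
  have hε'pos : 0 < ε' := lt_min one_pos hδ4
  have hε'top : ε' ≠ ∞ := ((min_le_left _ _).trans_lt ENNReal.one_lt_top).ne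
  set ε : ℝ := ε'.toReal with hεdef
  have hεpos : 0 < ε := ENNReal.toReal_pos hε'pos.ne' hε'top
  have hεle : ENNReal.ofReal ε ≤ δ / 4 := by
    rw [hεdef, ENNReal.ofReal_toReal hε'top]; exact min_le_right _ _
  -- choose c
  obtain ⟨c₁, hc₁⟩ := ENNReal.tendsto_atTop_zero.mp hYui (δ / 4) hδ4
  obtain ⟨c₂, hc₂⟩ := ENNReal.tendsto_atTop_zero.mp hXui (δ / 4) hδ4
  set c : ℝ := max 1 (max c₁ c₂) with hcdef
  have hc0 : (0 : ℝ) ≤ c := zero_le_one.trans (le_max_left _ _)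
  have hYc : subExp Ps (fun ω => Set.indicator {ω' | c < Y ω'} Y ω) ≤ δ / 4 :=
    hc₁ c ((le_max_left _ _).trans (le_max_right _ _))
  have hXc : subExp Ps (fun ω => Set.indicator {ω' | c < |X ω'|} (fun ω' => |X ω'|) ω) ≤ δ / 4 :=
    hc₂ c ((le_max_right _ _).trans (le_max_right _ _))
  have h2cne : ENNReal.ofReal (2 * c) ≠ ∞ := ENNReal.ofReal_ne_top
  -- choose N
  obtain ⟨N, hN⟩ := ENNReal.tendsto_atTop_zero.mp (hconv ε hεpos)
    (δ / 4 / ENNReal.ofReal (2 * c)) (ENNReal.div_pos hδ4.ne' h2cne)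
  refine ⟨N, fun n hn => ?_⟩
  -- key bound
  have key : subExp Ps (fun ω => |Xn n ω - X ω|) ≤
      ENNReal.ofReal ε
      + ENNReal.ofReal (2 * c) * upperCap Ps {ω | ε ≤ |Xn n ω - X ω|}
      + subExp Ps (fun ω => Set.indicator {ω' | c < Y ω'} Y ω)
      + subExp Ps (fun ω => Set.indicator {ω' | c < |X ω'|} (fun ω' => |X ω'|) ω) := by
    refine iSup₂_le fun P hP => ?_
    haveI := hprob P hP
    have hbadm : MeasurableSet {ω | ε ≤ |Xn n ω - X ω|} :=
      measurableSet_le measurable_const ((hXn n).sub hX).abs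
    have hYset : MeasurableSet {ω' | c < Y ω'} := measurableSet_lt measurable_const hY
    have hXset : MeasurableSet {ω' | c < |X ω'|} := measurableSet_lt measurable_const hX.abs
    have hYnn : ∀ ω, 0 ≤ Set.indicator {ω' | c < Y ω'} Y ω :=
      fun ω => Set.indicator_nonneg (fun a _ => hYpos a) ω
    have hXnn : ∀ ω, 0 ≤ Set.indicator {ω' | c < |X ω'|} (fun ω' => |X ω'|) ω :=
      fun ω => Set.indicator_nonneg (fun a _ => abs_nonneg _) ω
    have hpt : ∀ ω, ENNReal.ofReal |Xn n ω - X ω| ≤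
        ENNReal.ofReal ε
        + Set.indicator {ω | ε ≤ |Xn n ω - X ω|} (fun _ => ENNReal.ofReal (2 * c)) ω
        + ENNReal.ofReal (Set.indicator {ω' | c < Y ω'} Y ω)
        + ENNReal.ofReal (Set.indicator {ω' | c < |X ω'|} (fun ω' => |X ω'|) ω) := by
      intro ω
      by_cases h : ε ≤ |Xn n ω - X ω|
      · have hY1 : Y ω ≤ c + Set.indicator {ω' | c < Y ω'} Y ω := by
          by_cases hy : ω ∈ {ω' | c < Y ω'}
          · rw [Set.indicator_of_mem hy]; linarith
          · rw [Set.indicator_of_notMem hy]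
            simp only [Set.mem_setOf_eq, not_lt] at hy; linarith
        have hX1 : |X ω| ≤ c + Set.indicator {ω' | c < |X ω'|} (fun ω' => |X ω'|) ω := by
          by_cases hx : ω ∈ {ω' | c < |X ω'|}
          · rw [Set.indicator_of_mem hx]
            simp only [Set.mem_setOf_eq] at hx; linarith
          · rw [Set.indicator_of_notMem hx]
            simp only [Set.mem_setOf_eq, not_lt] at hx; linarith
        have h1 : |Xn n ω - X ω| ≤ 2 * c + Set.indicator {ω' | c < Y ω'} Y ω
            + Set.indicator {ω' | c < |X ω'|} (fun ω' => |X ω'|) ω := by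
          have h2 : |Xn n ω - X ω| ≤ |Xn n ω| + |X ω| := abs_sub _ _
          have h3 := hdom n ω
          linarith
        rw [Set.indicator_of_mem (show ω ∈ {ω | ε ≤ |Xn n ω - X ω|} from h) (fun _ => ENNReal.ofReal (2 * c))]
        calc ENNReal.ofReal |Xn n ω - X ω|
            ≤ ENNReal.ofReal (2 * c + Set.indicator {ω' | c < Y ω'} Y ω
              + Set.indicator {ω' | c < |X ω'|} (fun ω' => |X ω'|) ω) :=
              ENNReal.ofReal_le_ofReal h1
          _ ≤ ENNReal.ofReal (2 * c) + ENNReal.ofReal (Set.indicator {ω' | c < Y ω'} Y ω)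
              + ENNReal.ofReal (Set.indicator {ω' | c < |X ω'|} (fun ω' => |X ω'|) ω) := by
              rw [ENNReal.ofReal_add (add_nonneg (mul_nonneg (by norm_num) hc0) (hYnn ω)) (hXnn ω),
                ENNReal.ofReal_add (mul_nonneg (by norm_num) hc0) (hYnn ω)]
          _ ≤ _ := add_le_add_left (add_le_add_left le_add_self _) _
      · push_neg at h
        have : ENNReal.ofReal |Xn n ω - X ω| ≤ ENNReal.ofReal ε :=
          ENNReal.ofReal_le_ofReal h.le
        exact this.trans (le_add_right (le_add_right (le_add_right le_rfl)))
    have m2 : Measurable (Set.indicator {ω | ε ≤ |Xn n ω - X ω|}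
        (fun _ : Ω => ENNReal.ofReal (2 * c))) := measurable_const.indicator hbadm
    have m3 : Measurable (fun ω => ENNReal.ofReal (Set.indicator {ω' | c < Y ω'} Y ω)) :=
      ENNReal.measurable_ofReal.comp (hY.indicator hYset)
    have m4 : Measurable (fun ω => ENNReal.ofReal
        (Set.indicator {ω' | c < |X ω'|} (fun ω' => |X ω'|) ω)) :=
      ENNReal.measurable_ofReal.comp (hX.abs.indicator hXset)
    calc (∫⁻ ω, ENNReal.ofReal |Xn n ω - X ω| ∂P)
        ≤ ∫⁻ ω, (ENNReal.ofReal ε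
          + Set.indicator {ω | ε ≤ |Xn n ω - X ω|} (fun _ => ENNReal.ofReal (2 * c)) ω
          + ENNReal.ofReal (Set.indicator {ω' | c < Y ω'} Y ω)
          + ENNReal.ofReal (Set.indicator {ω' | c < |X ω'|} (fun ω' => |X ω'|) ω)) ∂P :=
          lintegral_mono hpt
      _ = ENNReal.ofReal ε
          + ENNReal.ofReal (2 * c) * P {ω | ε ≤ |Xn n ω - X ω|}
          + (∫⁻ ω, ENNReal.ofReal (Set.indicator {ω' | c < Y ω'} Y ω) ∂P)
          + (∫⁻ ω, ENNReal.ofReal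
              (Set.indicator {ω' | c < |X ω'|} (fun ω' => |X ω'|) ω) ∂P) := by
          rw [lintegral_add_right _ m4, lintegral_add_right _ m3,
            lintegral_add_right _ m2, lintegral_const, measure_univ, mul_one,
            lintegral_indicator_const hbadm]
      _ ≤ _ := by
          gcongr
          · exact le_iSup₂_of_le P hP le_rfl
          · exact le_iSup₂_of_le P hP le_rfl
          · exact le_iSup₂_of_le P hP le_rfl
  have hcap : ENNReal.ofReal (2 * c) * upperCap Ps {ω | ε ≤ |Xn n ω - X ω|} ≤ δ / 4 := by
    have := hN n hn
    calc ENNReal.ofReal (2 * c) * upperCap Ps {ω | ε ≤ |Xn n ω - X ω|}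
        ≤ ENNReal.ofReal (2 * c) * (δ / 4 / ENNReal.ofReal (2 * c)) := by gcongr
      _ ≤ δ / 4 := ENNReal.mul_div_le
  have hsum : δ / 4 + δ / 4 + δ / 4 + δ / 4 = δ := by
    rw [ENNReal.div_add_div_same, ENNReal.div_add_div_same, ENNReal.div_add_div_same,
      show δ + δ + δ + δ = δ * 4 by ring, mul_div_assoc, ENNReal.div_self (by norm_num) (by norm_num), mul_one]
  calc subExp Ps (fun ω => |Xn n ω - X ω|) ≤ _ := key
    _ ≤ δ / 4 + δ / 4 + δ / 4 + δ / 4 := by gcongr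
    _ = δ := hsum
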